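/- For every pure quaternion q with spherical representation q = ρ(i sin φ cos θ + j sin φ sin θ + k cos φ), the modified spherical square q ×ₛ^{(1,2)} q := ρ²(i sin φ cos 2θ + j sin φ sin 2θ + k cos φ) equals the quaternionic product ρ(cos(θ/2) + k sin(θ/2)) · q · (cos(θ/2) − k sin(θ/2)). -/

import Mathlib

open scoped Quaternion
open Bornology

noncomputable def sCoord (ρ θ φ : ℝ) : ℍ[ℝ] :=
  ⟨0, ρ * (Real.sin φ * Real.cos θ), ρ * (Real.sin φ * Real.sin θ), ρ * Real.cos φ⟩

noncomputable def sphRho (q : ℍ[ℝ]) : ℝ := ‖q‖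

noncomputable def sphTheta (q : ℍ[ℝ]) : ℝ :=
  if q.imI = 0 ∧ q.imJ = 0 then 0
  else if Complex.arg ⟨q.imI, q.imJ⟩ < 0 then Complex.arg ⟨q.imI, q.imJ⟩ + 2 * Real.pi
  else Complex.arg ⟨q.imI, q.imJ⟩

open Classical in
noncomputable def sphPhi (q : ℍ[ℝ]) : ℝ :=
  if q = 0 then 0 else Real.arccos (q.imK / ‖q‖)

noncomputable def sprod (q₁ q₂ : ℍ[ℝ]) : ℍ[ℝ] :=
  sCoord (sphRho q₁ * sphRho q₂) (sphTheta q₁ + sphTheta q₂) (sphPhi q₁ + sphPhi q₂)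

noncomputable def spow (n : ℕ) (q : ℍ[ℝ]) : ℍ[ℝ] :=
  sCoord (sphRho q ^ n) (n * sphTheta q) (n * sphPhi q)

def qmk (a b c d : ℝ) : ℍ[ℝ] := ⟨a, b, c, d⟩

lemma sph_trig_theta (q : ℍ[ℝ]) (h : ¬ (q.imI = 0 ∧ q.imJ = 0)) :
    Real.cos (sphTheta q) = Real.cos (Complex.arg ⟨q.imI, q.imJ⟩) ∧
    Real.sin (sphTheta q) = Real.sin (Complex.arg ⟨q.imI, q.imJ⟩) := by
  unfold sphTheta
  rw [if_neg h]
  split_ifs with h2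
  · rw [Real.cos_add_two_pi, Real.sin_add_two_pi]; exact ⟨rfl, rfl⟩
  · exact ⟨rfl, rfl⟩

lemma sph_key (q : ℍ[ℝ]) (hq : q.re = 0) :
    q.imI = ‖q‖ * (Real.sin (sphPhi q) * Real.cos (sphTheta q)) ∧
    q.imJ = ‖q‖ * (Real.sin (sphPhi q) * Real.sin (sphTheta q)) ∧
    q.imK = ‖q‖ * Real.cos (sphPhi q) := by
  by_cases h0 : q = 0
  · simp [h0, sphPhi, sphTheta]
  have hn : 0 < ‖q‖ := norm_pos_iff.mpr h0
  have hns : ‖q‖ ^ 2 = q.imI ^ 2 + q.imJ ^ 2 + q.imK ^ 2 := by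
    have h := (Quaternion.normSq_eq_norm_mul_self q).symm
    rw [Quaternion.normSq_def'] at h
    nlinarith [h, hq]
  have hKle : q.imK ^ 2 ≤ ‖q‖ ^ 2 := by nlinarith [sq_nonneg q.imI, sq_nonneg q.imJ]
  have hb1 : -1 ≤ q.imK / ‖q‖ := by
    rw [le_div_iff₀ hn]
    nlinarith [sq_nonneg (‖q‖ + q.imK)]
  have hb2 : q.imK / ‖q‖ ≤ 1 := by
    rw [div_le_iff₀ hn]
    nlinarith [sq_nonneg (‖q‖ - q.imK)]
  have hK : q.imK = ‖q‖ * Real.cos (sphPhi q) := by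
    rw [sphPhi, if_neg h0, Real.cos_arccos hb1 hb2]
    field_simp
  have hsin : ‖q‖ * Real.sin (sphPhi q) = Real.sqrt (q.imI ^ 2 + q.imJ ^ 2) := by
    rw [sphPhi, if_neg h0, Real.sin_arccos]
    have h1 : 1 - (q.imK / ‖q‖) ^ 2 = (q.imI ^ 2 + q.imJ ^ 2) / ‖q‖ ^ 2 := by
      field_simp
      linarith [hns]
    rw [h1, Real.sqrt_div (by positivity), Real.sqrt_sq hn.le]
    field_simp
  refine ⟨?_, ?_, hK⟩
  · by_cases h12 : q.imI = 0 ∧ q.imJ = 0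
    · rw [← mul_assoc, hsin, h12.1, h12.2]
      simp
    · have hz : (⟨q.imI, q.imJ⟩ : ℂ) ≠ 0 := by
        simp only [ne_eq, Complex.ext_iff, Complex.zero_re, Complex.zero_im]
        exact h12
      have habs : ‖(⟨q.imI, q.imJ⟩ : ℂ)‖ = Real.sqrt (q.imI ^ 2 + q.imJ ^ 2) := by
        rw [Complex.norm_def, Complex.normSq_mk]
        ring_nf
      have hS : 0 < Real.sqrt (q.imI ^ 2 + q.imJ ^ 2) := by
        rw [← habs]
        exact norm_pos_iff.mpr hz
      rw [← mul_assoc, hsin, (sph_trig_theta q h12).1, Complex.cos_arg hz, habs]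
      field_simp
  · by_cases h12 : q.imI = 0 ∧ q.imJ = 0
    · rw [← mul_assoc, hsin, h12.1, h12.2]
      simp
    · have hz : (⟨q.imI, q.imJ⟩ : ℂ) ≠ 0 := by
        simp only [ne_eq, Complex.ext_iff, Complex.zero_re, Complex.zero_im]
        exact h12
      have habs : ‖(⟨q.imI, q.imJ⟩ : ℂ)‖ = Real.sqrt (q.imI ^ 2 + q.imJ ^ 2) := by
        rw [Complex.norm_def, Complex.normSq_mk]
        ring_nf
      have hS : 0 < Real.sqrt (q.imI ^ 2 + q.imJ ^ 2) := by
        rw [← habs]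
        exact norm_pos_iff.mpr hz
      rw [← mul_assoc, hsin, (sph_trig_theta q h12).2, Complex.sin_arg, habs]
      field_simp

/-- The modified spherical square ×ₛ^{(1,2)} equals a quaternionic rotation
product: q ×ₛ^{(1,2)} q = ρ(cos(θ/2) + k sin(θ/2)) q (cos(θ/2) − k sin(θ/2)). -/
theorem sprod12_eq_quaternionic_rotation (q : ℍ[ℝ]) (hq : q.re = 0) :
    sCoord (sphRho q ^ 2) (2 * sphTheta q) (sphPhi q) =
      (sphRho q) •
        (qmk (Real.cos (sphTheta q / 2)) 0 0 (Real.sin (sphTheta q / 2)) *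
          q *
          qmk (Real.cos (sphTheta q / 2)) 0 0 (-Real.sin (sphTheta q / 2))) := by
  obtain ⟨hI, hJ, hK⟩ := sph_key q hq
  set θ := sphTheta q with hθ
  set φ := sphPhi q with hφ
  have hhalf : 2 * (θ / 2) = θ := by ring
  have hc : Real.cos θ = Real.cos (θ / 2) ^ 2 - Real.sin (θ / 2) ^ 2 := by
    have h := Real.cos_two_mul' (θ / 2); rw [hhalf] at h; exact h.symm ▸ rfl
  have hs : Real.sin θ = 2 * Real.sin (θ / 2) * Real.cos (θ / 2) := by
    have h := Real.sin_two_mul (θ / 2); rw [hhalf] at h; exact h.symm ▸ rfl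
  have hpyth : Real.sin (θ / 2) ^ 2 + Real.cos (θ / 2) ^ 2 = 1 :=
    Real.sin_sq_add_cos_sq _
  refine QuaternionAlgebra.ext ?_ ?_ ?_ ?_ <;>
    simp only [sCoord, sphRho, Quaternion.re_mul, Quaternion.imI_mul,
      Quaternion.imJ_mul, Quaternion.imK_mul, Quaternion.re_smul, Quaternion.imI_smul,
      Quaternion.imJ_smul, Quaternion.imK_smul, smul_eq_mul, hq, hI, hJ, hK,
      Real.cos_two_mul', Real.sin_two_mul, hc, hs] <;> simp only [qmk]
  · ring
  · ring
  · ring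
  · linear_combination (-(‖q‖ ^ 2 * Real.cos φ)) * hpyth
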